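/- arXiv:2308.09320 — 3 statements merged into one kernel-verified Lean document; each statement's English description precedes it below -/
import Mathlib

section
/- Let n, m be positive integers, Ψ : ℝ → Mat_{n×m}(ℝ) and d̃ : ℝ → ℝⁿ be continuous with ‖d̃(t)‖ ≤ ρ₂ for all t, where ρ₂ > 0. Let P and L be n×n positive definite diagonal matrices, and let c₁ = λ_min(PL) and c₂ = λ_max(P). Suppose ṽ : ℝ → ℝⁿ and θ̃ : ℝ → ℝᵐ are differentiable and satisfy ṽ′(t) = Ψ(t) θ̃(t) − L ṽ(t) − d̃(t) and θ̃′(t) = −Ψ(t)ᵀ P ṽ(t) for all t. Then the function V₁(t) = ½ ṽ(t)ᵀ P ṽ(t) + ½ ‖θ̃(t)‖² satisfies V₁′(t) ≤ − c₁ ‖ṽ(t)‖² + c₂ ρ₂ ‖ṽ(t)‖ for all t. -/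
open Matrix

/-- Multiplication of a matrix with a vector of the corresponding Euclidean space. -/
def mulVecE {n m : ℕ} (M : Matrix (Fin n) (Fin m) ℝ) (x : EuclideanSpace ℝ (Fin m)) :
    EuclideanSpace ℝ (Fin n) :=
  WithLp.toLp 2 (M.mulVec x)

lemma euclid_norm_sq {k : ℕ} (x : EuclideanSpace ℝ (Fin k)) : ‖x‖ ^ 2 = ∑ i, x i ^ 2 := by
  rw [EuclideanSpace.norm_eq, Real.sq_sqrt (by positivity)]
  simp [Real.norm_eq_abs, sq_abs]

lemma euclid_cs {k : ℕ} (x y : EuclideanSpace ℝ (Fin k)) :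
    ∑ i, |x i| * |y i| ≤ ‖x‖ * ‖y‖ := by
  let a : EuclideanSpace ℝ (Fin k) := WithLp.toLp 2 (fun i => |x i|)
  let b : EuclideanSpace ℝ (Fin k) := WithLp.toLp 2 (fun i => |y i|)
  have h := real_inner_le_norm a b
  have ha : ‖a‖ = ‖x‖ := by
    rw [EuclideanSpace.norm_eq, EuclideanSpace.norm_eq]
    simp [a, Real.norm_eq_abs, abs_abs]
  have hb : ‖b‖ = ‖y‖ := by
    rw [EuclideanSpace.norm_eq, EuclideanSpace.norm_eq]
    simp [b, Real.norm_eq_abs, abs_abs]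
  rw [ha, hb] at h
  simpa [PiLp.inner_apply, a, b, mul_comm] using h

/-- Along the parameter-estimation error dynamics with bounded
disturbance `‖d̃(t)‖ ≤ ρ₂` and positive definite diagonal gains `P, L`, the
Lyapunov function `V₁(t) = ½ ṽᵀPṽ + ½‖θ̃‖²` satisfies
`V₁′(t) ≤ −c₁‖ṽ(t)‖² + c₂ρ₂‖ṽ(t)‖`, where `c₁ = λ_min(PL)` and
`c₂ = λ_max(P)` (for diagonal matrices these are the extreme diagonal entries). -/
theorem stmt2
    (n m : ℕ) (hn : 0 < n) (hm : 0 < m)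
    (Ψ : ℝ → Matrix (Fin n) (Fin m) ℝ) (hΨ : Continuous Ψ)
    (ρ₂ : ℝ) (hρ₂ : 0 < ρ₂)
    (dtil : ℝ → EuclideanSpace ℝ (Fin n)) (hdc : Continuous dtil)
    (hdb : ∀ t, ‖dtil t‖ ≤ ρ₂)
    (p l : Fin n → ℝ) (hp : ∀ i, 0 < p i) (hl : ∀ i, 0 < l i)
    (P L : Matrix (Fin n) (Fin n) ℝ)
    (hP : P = Matrix.diagonal p) (hL : L = Matrix.diagonal l)
    (c₁ c₂ : ℝ) (hc₁ : c₁ = ⨅ i, p i * l i) (hc₂ : c₂ = ⨆ i, p i)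
    (vtil : ℝ → EuclideanSpace ℝ (Fin n)) (θtil : ℝ → EuclideanSpace ℝ (Fin m))
    (hv : ∀ t, HasDerivAt vtil (mulVecE (Ψ t) (θtil t) - mulVecE L (vtil t) - dtil t) t)
    (hθ : ∀ t, HasDerivAt θtil (-(mulVecE (Ψ t)ᵀ (mulVecE P (vtil t)))) t)
    (V₁ : ℝ → ℝ)
    (hV₁ : ∀ t, V₁ t = (1/2) * (vtil t ⬝ᵥ P *ᵥ vtil t) + (1/2) * ‖θtil t‖ ^ 2) :
    ∀ t, deriv V₁ t ≤ -c₁ * ‖vtil t‖ ^ 2 + c₂ * ρ₂ * ‖vtil t‖ := by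
  have hne : Nonempty (Fin n) := ⟨⟨0, hn⟩⟩
  have hVeq : V₁ = fun s => (∑ i, (1/2) * (p i * (vtil s i)^2)) + ∑ j, (1/2) * (θtil s j)^2 := by
    funext s
    rw [hV₁ s, hP, euclid_norm_sq]
    simp only [dotProduct, Matrix.mulVec_diagonal]
    rw [Finset.mul_sum, Finset.mul_sum]
    congr 1
    all_goals exact Finset.sum_congr rfl fun i _ => by ring
  intro t
  set w : EuclideanSpace ℝ (Fin n) := mulVecE (Ψ t) (θtil t) - mulVecE L (vtil t) - dtil t with hw
  set z : EuclideanSpace ℝ (Fin m) := -(mulVecE (Ψ t)ᵀ (mulVecE P (vtil t))) with hz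
  have hvc : ∀ i : Fin n, HasDerivAt (fun s => vtil s i) (w i) t := fun i =>
    (EuclideanSpace.proj (𝕜 := ℝ) i).hasFDerivAt.comp_hasDerivAt t (hv t)
  have hθc : ∀ j : Fin m, HasDerivAt (fun s => θtil s j) (z j) t := fun j =>
    (EuclideanSpace.proj (𝕜 := ℝ) j).hasFDerivAt.comp_hasDerivAt t (hθ t)
  have hD : HasDerivAt V₁
      ((∑ i, p i * vtil t i * w i) + ∑ j, θtil t j * z j) t := by
    rw [hVeq]
    have h1 : HasDerivAt (fun s => ∑ i, (1/2) * (p i * (vtil s i)^2))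
        (∑ i, p i * vtil t i * w i) t := by
      have h := HasDerivAt.fun_sum (u := Finset.univ) (A := fun (i : Fin n) s => (1/2 : ℝ) * (p i * (vtil s i)^2))
        (A' := fun i => (1/2 : ℝ) * (p i * ((2 : ℕ) * vtil t i ^ 1 * w i)))
        (fun i _ => (((hvc i).pow 2).const_mul (p i)).const_mul (1/2 : ℝ))
      refine h.congr_deriv ?_
      exact Finset.sum_congr rfl fun i _ => by push_cast; ring
    have h2 : HasDerivAt (fun s => ∑ j, (1/2) * (θtil s j)^2)
        (∑ j, θtil t j * z j) t := by
      have h := HasDerivAt.fun_sum (u := Finset.univ) (A := fun (j : Fin m) s => (1/2 : ℝ) * (θtil s j)^2)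
        (A' := fun j => (1/2 : ℝ) * ((2 : ℕ) * θtil t j ^ 1 * z j))
        (fun j _ => ((hθc j).pow 2).const_mul (1/2 : ℝ))
      refine h.congr_deriv ?_
      exact Finset.sum_congr rfl fun j _ => by push_cast; ring
    exact h1.add h2
  rw [hD.deriv]
  have hcancel : (∑ i, p i * vtil t i * w i) + ∑ j, θtil t j * z j
      = -(∑ i, p i * l i * (vtil t i)^2) - ∑ i, p i * vtil t i * dtil t i := by
    simp only [hw, hz, mulVecE, hP, hL, PiLp.sub_apply, PiLp.neg_apply, Matrix.mulVec,
      dotProduct, Matrix.transpose_apply, Matrix.diagonal_apply, ite_mul, zero_mul,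
      Finset.sum_ite_eq, Finset.mem_univ, if_true]
    have key : ∑ j, θtil t j * (-(∑ i, Ψ t i j * (p i * vtil t i)))
        = -∑ i, p i * vtil t i * (∑ j, Ψ t i j * θtil t j) := by
      simp_rw [mul_neg, Finset.sum_neg_distrib]
      congr 1
      simp_rw [Finset.mul_sum]
      rw [Finset.sum_comm]
      exact Finset.sum_congr rfl fun i _ => Finset.sum_congr rfl fun j _ => by ring
    rw [key]
    simp_rw [mul_sub]
    rw [Finset.sum_sub_distrib, Finset.sum_sub_distrib]
    have e1 : ∑ i, p i * vtil t i * (l i * vtil t i) = ∑ i, p i * l i * (vtil t i)^2 :=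
      Finset.sum_congr rfl fun i _ => by ring
    rw [e1]
    ring
  rw [hcancel]
  have hc₁le : ∀ i, c₁ ≤ p i * l i := fun i => by
    rw [hc₁]; exact ciInf_le (Finite.bddBelow_range _) i
  have hc₂ge : ∀ i, p i ≤ c₂ := fun i => by
    rw [hc₂]; exact le_ciSup (Finite.bddAbove_range _) i
  have hc₂pos : 0 < c₂ := lt_of_lt_of_le (hp ⟨0, hn⟩) (hc₂ge ⟨0, hn⟩)
  have b1 : -(∑ i, p i * l i * (vtil t i)^2) ≤ -c₁ * ‖vtil t‖ ^ 2 := by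
    rw [euclid_norm_sq]
    have h : c₁ * ∑ i, (vtil t i)^2 ≤ ∑ i, p i * l i * (vtil t i)^2 := by
      rw [Finset.mul_sum]
      exact Finset.sum_le_sum fun i _ =>
        mul_le_mul_of_nonneg_right (hc₁le i) (sq_nonneg _)
    linarith
  have b2 : -(∑ i, p i * vtil t i * dtil t i) ≤ c₂ * ρ₂ * ‖vtil t‖ := by
    have step1 : -(∑ i, p i * vtil t i * dtil t i) ≤ ∑ i, c₂ * (|vtil t i| * |dtil t i|) := by
      rw [← Finset.sum_neg_distrib]
      refine Finset.sum_le_sum fun i _ => ?_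
      have h1 : -(p i * vtil t i * dtil t i) ≤ p i * (|vtil t i| * |dtil t i|) := by
        have h := neg_abs_le (p i * vtil t i * dtil t i)
        have habs : |p i * vtil t i * dtil t i| = p i * (|vtil t i| * |dtil t i|) := by
          rw [abs_mul, abs_mul, abs_of_pos (hp i)]; ring
        linarith
      have h2 : p i * (|vtil t i| * |dtil t i|) ≤ c₂ * (|vtil t i| * |dtil t i|) :=
        mul_le_mul_of_nonneg_right (hc₂ge i) (by positivity)
      linarith
    have step2 : ∑ i, c₂ * (|vtil t i| * |dtil t i|) ≤ c₂ * (‖vtil t‖ * ‖dtil t‖) := by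
      rw [← Finset.mul_sum]
      exact mul_le_mul_of_nonneg_left (euclid_cs _ _) hc₂pos.le
    have h4 : ‖vtil t‖ * ‖dtil t‖ ≤ ρ₂ * ‖vtil t‖ := by
      rw [mul_comm ρ₂]
      exact mul_le_mul_of_nonneg_left (hdb t) (norm_nonneg _)
    have step3 : c₂ * (‖vtil t‖ * ‖dtil t‖) ≤ c₂ * ρ₂ * ‖vtil t‖ := by
      calc c₂ * (‖vtil t‖ * ‖dtil t‖) ≤ c₂ * (ρ₂ * ‖vtil t‖) :=
            mul_le_mul_of_nonneg_left h4 hc₂pos.le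
        _ = c₂ * ρ₂ * ‖vtil t‖ := by ring
    linarith
  linarith
end

section
/- Let n, m be positive integers, Ψ : ℝ → Mat_{n×m}(ℝ) and d̃ : ℝ → ℝⁿ be continuous with ‖d̃(t)‖ ≤ ρ₂ for all t, where ρ₂ > 0. Let P and L be n×n positive definite diagonal matrices, set c₁ = λ_min(PL), c₂ = λ_max(P), fix α with 0 < α < c₁, and set μ = c₂ρ₂/α and k = (c₁ − α)μ². Suppose ṽ : ℝ → ℝⁿ and θ̃ : ℝ → ℝᵐ are differentiable and satisfy ṽ′(t) = Ψ(t) θ̃(t) − L ṽ(t) − d̃(t) and θ̃′(t) = −Ψ(t)ᵀ P ṽ(t) for all t, and let V₁(t) = ½ ṽ(t)ᵀ P ṽ(t) + ½ ‖θ̃(t)‖². If t₀ ≤ t₁ and ‖ṽ(t)‖ ≥ μ for all t ∈ [t₀, t₁], then V₁(t₁) ≤ V₁(t₀) − k (t₁ − t₀). Consequently, t₁ − t₀ ≤ V₁(t₀)/k, i.e., the observation error ṽ must enter the ball of radius μ within time V₁(t₀)/k after t₀. -/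
open Matrix

private lemma normsqE {N : ℕ} (x : EuclideanSpace ℝ (Fin N)) : ‖x‖ ^ 2 = ∑ i, x i ^ 2 := by
  rw [EuclideanSpace.norm_eq, Real.sq_sqrt (by positivity)]
  simp [sq_abs]

/-- Along the parameter-estimation error dynamics with bounded
disturbance and positive definite diagonal gains, if the observation error
satisfies `‖ṽ(t)‖ ≥ μ` on the whole interval `[t₀, t₁]`, then the Lyapunov
function `V₁` decreases at least linearly, `V₁(t₁) ≤ V₁(t₀) − k(t₁ − t₀)`, and
consequently `t₁ − t₀ ≤ V₁(t₀)/k`. Here `c₁ = λ_min(PL)`, `c₂ = λ_max(P)`,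
`0 < α < c₁`, `μ = c₂ρ₂/α` and `k = (c₁ − α)μ²`. -/
theorem stmt3
    (n m : ℕ) (hn : 0 < n) (hm : 0 < m)
    (Ψ : ℝ → Matrix (Fin n) (Fin m) ℝ) (hΨ : Continuous Ψ)
    (ρ₂ : ℝ) (hρ₂ : 0 < ρ₂)
    (dtil : ℝ → EuclideanSpace ℝ (Fin n)) (hdc : Continuous dtil)
    (hdb : ∀ t, ‖dtil t‖ ≤ ρ₂)
    (p l : Fin n → ℝ) (hp : ∀ i, 0 < p i) (hl : ∀ i, 0 < l i)
    (P L : Matrix (Fin n) (Fin n) ℝ)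
    (hP : P = Matrix.diagonal p) (hL : L = Matrix.diagonal l)
    (c₁ c₂ : ℝ) (hc₁ : c₁ = ⨅ i, p i * l i) (hc₂ : c₂ = ⨆ i, p i)
    (α μ k : ℝ) (hα : 0 < α) (hαc : α < c₁)
    (hμ : μ = c₂ * ρ₂ / α) (hk : k = (c₁ - α) * μ ^ 2)
    (vtil : ℝ → EuclideanSpace ℝ (Fin n)) (θtil : ℝ → EuclideanSpace ℝ (Fin m))
    (hv : ∀ t, HasDerivAt vtil (mulVecE (Ψ t) (θtil t) - mulVecE L (vtil t) - dtil t) t)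
    (hθ : ∀ t, HasDerivAt θtil (-(mulVecE (Ψ t)ᵀ (mulVecE P (vtil t)))) t)
    (V₁ : ℝ → ℝ)
    (hV₁ : ∀ t, V₁ t = (1/2) * (vtil t ⬝ᵥ P *ᵥ vtil t) + (1/2) * ‖θtil t‖ ^ 2)
    (t₀ t₁ : ℝ) (ht : t₀ ≤ t₁)
    (hbig : ∀ t ∈ Set.Icc t₀ t₁, μ ≤ ‖vtil t‖) :
    V₁ t₁ ≤ V₁ t₀ - k * (t₁ - t₀) ∧ t₁ - t₀ ≤ V₁ t₀ / k := by
  have hne : Nonempty (Fin n) := ⟨⟨0, hn⟩⟩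
  -- basic facts about the constants
  have hc₁le : ∀ i, c₁ ≤ p i * l i := fun i => by
    rw [hc₁]; exact ciInf_le (Set.Finite.bddBelow (Set.finite_range _)) i
  have hc₂ge : ∀ i, p i ≤ c₂ := fun i => by
    rw [hc₂]; exact le_ciSup (Set.Finite.bddAbove (Set.finite_range _)) i
  have hc₁pos : 0 < c₁ := hα.trans hαc
  have hc₂pos : 0 < c₂ := (hp ⟨0, hn⟩).trans_le (hc₂ge _)
  have hμpos : 0 < μ := by rw [hμ]; positivity
  have hkpos : 0 < k := by
    have hca : 0 < c₁ - α := by linarith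
    rw [hk]; positivity
  have hαμ : α * μ = c₂ * ρ₂ := by rw [hμ]; field_simp
  -- shorthand for the derivatives
  set w : ℝ → EuclideanSpace ℝ (Fin n) :=
    fun t => mulVecE (Ψ t) (θtil t) - mulVecE L (vtil t) - dtil t with hw
  set u : ℝ → EuclideanSpace ℝ (Fin m) :=
    fun t => -(mulVecE (Ψ t)ᵀ (mulVecE P (vtil t))) with hu
  -- componentwise derivatives
  have hvC : ∀ t (i : Fin n), HasDerivAt (fun s => vtil s i) (w t i) t := by
    intro t i
    have h := (EuclideanSpace.proj (𝕜 := ℝ) i).hasFDerivAt.comp_hasDerivAt t (hv t)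
    exact h
  have hθC : ∀ t (j : Fin m), HasDerivAt (fun s => θtil s j) (u t j) t := by
    intro t j
    have h := (EuclideanSpace.proj (𝕜 := ℝ) j).hasFDerivAt.comp_hasDerivAt t (hθ t)
    exact h
  -- V₁ as a sum of squares
  have hVF : V₁ = fun t => (∑ i, (1/2 * p i) * vtil t i ^ 2) + ∑ j, (1/2) * θtil t j ^ 2 := by
    funext t
    rw [hV₁ t, hP, normsqE]
    have h1 : vtil t ⬝ᵥ Matrix.diagonal p *ᵥ vtil t = ∑ i, p i * vtil t i ^ 2 := by
      simp only [dotProduct, Matrix.mulVec_diagonal]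
      exact Finset.sum_congr rfl fun i _ => by ring
    rw [h1, Finset.mul_sum, Finset.mul_sum]
    congr 1
    · exact Finset.sum_congr rfl fun i _ => by ring
  -- derivative of V₁
  have hVd : ∀ t, HasDerivAt V₁
      ((∑ i, p i * vtil t i * w t i) + ∑ j, θtil t j * u t j) t := by
    intro t
    rw [hVF]
    apply HasDerivAt.add
    · exact HasDerivAt.fun_sum fun i _ => by
        have h := ((hvC t i).pow 2).const_mul (1/2 * p i)
        have e : (1/2 * p i) * ((2:ℕ) * vtil t i ^ (2-1) * w t i) = p i * vtil t i * w t i := by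
          push_cast; ring
        rwa [e] at h
    · exact HasDerivAt.fun_sum fun j _ => by
        have h := ((hθC t j).pow 2).const_mul ((1:ℝ)/2)
        have e : (1:ℝ)/2 * ((2:ℕ) * θtil t j ^ (2-1) * u t j) = θtil t j * u t j := by
          push_cast; ring
        rwa [e] at h
  -- algebraic simplification of the derivative
  have hPv : ∀ s, mulVecE P (vtil s) = fun i => p i * vtil s i := by
    intro s; funext i; simp [mulVecE, hP, Matrix.mulVec_diagonal]
  have hDeq : ∀ t, (∑ i, p i * vtil t i * w t i) + ∑ j, θtil t j * u t j
      = -(∑ i, p i * l i * vtil t i ^ 2) - ∑ i, p i * vtil t i * dtil t i := by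
    intro t
    have hwc : ∀ i, w t i = (∑ j, Ψ t i j * θtil t j) - l i * vtil t i - dtil t i := by
      intro i
      simp [hw, mulVecE, hL, PiLp.sub_apply, Matrix.mulVec_diagonal, Matrix.mulVec,
        dotProduct, Matrix.diagonal_apply, ite_mul, Finset.sum_ite_eq]
    have huc : ∀ j, u t j = -(∑ i, Ψ t i j * (p i * vtil t i)) := by
      intro j
      simp only [hu, PiLp.neg_apply]
      rw [show mulVecE P (vtil t) = WithLp.toLp 2 (fun i => p i * vtil t i) from by rw [← hPv t]]
      simp [mulVecE, Matrix.mulVec, dotProduct, Matrix.transpose_apply]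
    simp only [hwc, huc]
    have e1 : ∑ i, p i * vtil t i * ((∑ j, Ψ t i j * θtil t j) - l i * vtil t i - dtil t i)
        = (∑ i, p i * vtil t i * (∑ j, Ψ t i j * θtil t j))
          - (∑ i, p i * l i * vtil t i ^ 2) - ∑ i, p i * vtil t i * dtil t i := by
      rw [← Finset.sum_sub_distrib, ← Finset.sum_sub_distrib]
      exact Finset.sum_congr rfl fun i _ => by ring
    have e2 : ∑ j, θtil t j * -(∑ i, Ψ t i j * (p i * vtil t i))
        = -∑ j, θtil t j * (∑ i, Ψ t i j * (p i * vtil t i)) := by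
      rw [← Finset.sum_neg_distrib]
      exact Finset.sum_congr rfl fun j _ => by ring
    have hcancel : ∑ i, p i * vtil t i * (∑ j, Ψ t i j * θtil t j)
        = ∑ j, θtil t j * (∑ i, Ψ t i j * (p i * vtil t i)) := by
      simp_rw [Finset.mul_sum]
      rw [Finset.sum_comm]
      exact Finset.sum_congr rfl fun j _ => Finset.sum_congr rfl fun i _ => by ring
    rw [e1, e2, hcancel]
    ring
  -- the key derivative bound on the interval
  have key : ∀ t ∈ Set.Icc t₀ t₁,
      (∑ i, p i * vtil t i * w t i) + ∑ j, θtil t j * u t j ≤ -k := by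
    intro t htI
    rw [hDeq t]
    set N := ‖vtil t‖ with hN
    have hμN : μ ≤ N := hbig t htI
    have hNpos : 0 < N := hμpos.trans_le hμN
    have hNsq : ∑ i, vtil t i ^ 2 = N ^ 2 := (normsqE _).symm
    have h1 : c₁ * N ^ 2 ≤ ∑ i, p i * l i * vtil t i ^ 2 := by
      rw [← hNsq, Finset.mul_sum]
      exact Finset.sum_le_sum fun i _ => mul_le_mul_of_nonneg_right (hc₁le i) (sq_nonneg _)
    have h2 : -(c₂ * ρ₂ * N) ≤ ∑ i, p i * vtil t i * dtil t i := by
      have hcs := Finset.sum_mul_sq_le_sq_mul_sq Finset.univ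
        (fun i => p i * vtil t i) (fun i => dtil t i)
      have hA : ∑ i, (p i * vtil t i) ^ 2 ≤ c₂ ^ 2 * N ^ 2 := by
        rw [← hNsq, Finset.mul_sum]
        refine Finset.sum_le_sum fun i _ => ?_
        have hpc : p i ^ 2 ≤ c₂ ^ 2 := pow_le_pow_left₀ (hp i).le (hc₂ge i) 2
        calc (p i * vtil t i) ^ 2 = p i ^ 2 * vtil t i ^ 2 := by ring
          _ ≤ c₂ ^ 2 * vtil t i ^ 2 := mul_le_mul_of_nonneg_right hpc (sq_nonneg _)
      have hB : ∑ i, (dtil t i) ^ 2 ≤ ρ₂ ^ 2 := by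
        rw [← normsqE]
        exact pow_le_pow_left₀ (norm_nonneg _) (hdb t) 2
      have hprod : (∑ i, p i * vtil t i * dtil t i) ^ 2 ≤ (c₂ * ρ₂ * N) ^ 2 := by
        refine hcs.trans ?_
        have h0 : (0:ℝ) ≤ ∑ i, (dtil t i) ^ 2 := Finset.sum_nonneg fun i _ => sq_nonneg _
        calc (∑ i, (p i * vtil t i) ^ 2) * ∑ i, (dtil t i) ^ 2
            ≤ (c₂ ^ 2 * N ^ 2) * ρ₂ ^ 2 := by
              exact mul_le_mul hA hB h0 (by positivity)
          _ = (c₂ * ρ₂ * N) ^ 2 := by ring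
      nlinarith [sq_nonneg ((∑ i, p i * vtil t i * dtil t i) + c₂ * ρ₂ * N),
        mul_pos (mul_pos hc₂pos hρ₂) hNpos]
    have hμ2 : μ ^ 2 ≤ N ^ 2 := pow_le_pow_left₀ hμpos.le hμN 2
    have hmono : (c₁ - α) * μ ^ 2 ≤ (c₁ - α) * N ^ 2 :=
      mul_le_mul_of_nonneg_left hμ2 (by linarith)
    have hαN : α * μ * N ≤ α * N ^ 2 := by
      have : μ * N ≤ N * N := mul_le_mul_of_nonneg_right hμN hNpos.le
      calc α * μ * N = α * (μ * N) := by ring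
        _ ≤ α * (N * N) := mul_le_mul_of_nonneg_left this hα.le
        _ = α * N ^ 2 := by ring
    rw [hk]
    have hcd : c₂ * ρ₂ * N ≤ α * N ^ 2 := by rw [← hαμ]; exact hαN
    linarith
  -- V₁ + k·t is antitone on [t₀, t₁]
  have hanti : AntitoneOn (fun t => V₁ t + k * t) (Set.Icc t₀ t₁) := by
    apply antitoneOn_of_deriv_nonpos (convex_Icc _ _)
    · exact (Continuous.continuousOn (by
        exact (continuous_iff_continuousAt.2 fun t => (hVd t).differentiableAt.continuousAt).add
          (continuous_const.mul continuous_id)))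
    · intro x hx
      have hkd : HasDerivAt (fun y : ℝ => k * y) k x := by
        simpa using (hasDerivAt_id x).const_mul k
      exact ((hVd x).add hkd).differentiableAt.differentiableWithinAt
    · intro x hx
      rw [interior_Icc] at hx
      have hkd : HasDerivAt (fun y : ℝ => k * y) k x := by
        simpa using (hasDerivAt_id x).const_mul k
      have hD : deriv (fun t => V₁ t + k * t) x
          = ((∑ i, p i * vtil x i * w x i) + ∑ j, θtil x j * u x j) + k := ((hVd x).add hkd).deriv
      rw [hD]
      have := key x ⟨hx.1.le, hx.2.le⟩
      linarith
  have hmain := hanti (Set.left_mem_Icc.2 ht) (Set.right_mem_Icc.2 ht) ht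
  simp only at hmain
  have hfirst : V₁ t₁ ≤ V₁ t₀ - k * (t₁ - t₀) := by linarith
  refine ⟨hfirst, ?_⟩
  have hV₁nonneg : 0 ≤ V₁ t₁ := by
    rw [hVF]
    exact add_nonneg (Finset.sum_nonneg fun i _ => by have := (hp i).le; positivity)
      (Finset.sum_nonneg fun j _ => by positivity)
  rw [le_div_iff₀ hkpos]
  linarith
end

section
/- Let a, b, d be strictly positive real constants and let p, q : ℝ → ℝ be continuous functions with p(t) ≥ 0 and q(t) ≥ 0 for all t. Suppose ϑ : ℝ → ℝ is differentiable and satisfies the shunting neurodynamics equation ϑ′(t) = − a ϑ(t) + (b − ϑ(t)) p(t) − (d + ϑ(t)) q(t) for all t ≥ 0, and suppose −d ≤ ϑ(0) ≤ b. Then −d ≤ ϑ(t) ≤ b for all t ≥ 0; that is, the neural activity remains bounded above by b and below by −d. -/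
/-- Boundedness of the shunting neurodynamics model: if
`ϑ′ = −aϑ + (b − ϑ)p(t) − (d + ϑ)q(t)` with `a, b, d > 0`, continuous
nonnegative inputs `p, q`, and `−d ≤ ϑ(0) ≤ b`, then `−d ≤ ϑ(t) ≤ b` for all
`t ≥ 0`. -/
theorem stmt10
    (a b d : ℝ) (ha : 0 < a) (hb : 0 < b) (hd : 0 < d)
    (p q : ℝ → ℝ) (hpc : Continuous p) (hqc : Continuous q)
    (hp : ∀ t, 0 ≤ p t) (hq : ∀ t, 0 ≤ q t)
    (ϑ : ℝ → ℝ)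
    (hode : ∀ t : ℝ, 0 ≤ t →
      HasDerivAt ϑ (-a * ϑ t + (b - ϑ t) * p t - (d + ϑ t) * q t) t)
    (h0 : -d ≤ ϑ 0 ∧ ϑ 0 ≤ b) :
    ∀ t : ℝ, 0 ≤ t → -d ≤ ϑ t ∧ ϑ t ≤ b := by
  intro t ht
  set f' : ℝ → ℝ := fun x => -a * ϑ x + (b - ϑ x) * p x - (d + ϑ x) * q x with hf'
  have hcont : ContinuousOn ϑ (Set.Icc 0 t) := fun x hx =>
    ((hode x hx.1).continuousAt).continuousWithinAt
  have hderiv : ∀ x ∈ Set.Ico (0:ℝ) t, HasDerivWithinAt ϑ (f' x) (Set.Ici x) x :=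
    fun x hx => (hode x hx.1).hasDerivWithinAt
  constructor
  · -- lower bound: show  -ϑ x ≤ d on [0, t]
    have key : ∀ ⦃x⦄, x ∈ Set.Icc (0:ℝ) t → (fun s => -ϑ s) x ≤ (fun _ : ℝ => d) x := by
      refine image_le_of_deriv_right_lt_deriv_boundary
        (f := fun s => -ϑ s) (f' := fun x => -(f' x)) (B := fun _ => d) (B' := fun _ => (0:ℝ))
        hcont.neg (fun x hx => (hderiv x hx).neg) (by show -ϑ 0 ≤ d; linarith [h0.1])
        (fun x => hasDerivAt_const x d) ?_
      intro x hx hval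
      have hϑ : ϑ x = -d := by
        have : -ϑ x = d := hval
        linarith
      have heq : f' x = a * d + (b + d) * p x := by
        simp only [hf', hϑ]; ring
      have hpos : 0 < f' x := by
        rw [heq]
        have := mul_nonneg (by linarith : (0:ℝ) ≤ b + d) (hp x)
        nlinarith
      simpa using hpos
    have hkey := key (Set.mem_Icc.mpr ⟨ht, le_refl t⟩)
    simp only at hkey
    linarith
  · have key : ∀ ⦃x⦄, x ∈ Set.Icc (0:ℝ) t → ϑ x ≤ (fun _ : ℝ => b) x := by
      refine image_le_of_deriv_right_lt_deriv_boundary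
        (f := ϑ) (f' := f') (B := fun _ => b) (B' := fun _ => (0:ℝ))
        hcont hderiv h0.2 (fun x => hasDerivAt_const x b) ?_
      intro x hx hval
      have heq : f' x = -(a * b) - (d + b) * q x := by
        simp only [hf', hval]; ring
      show f' x < 0
      rw [heq]
      have := mul_nonneg (by linarith : (0:ℝ) ≤ d + b) (hq x)
      nlinarith
    exact key (Set.mem_Icc.mpr ⟨ht, le_refl t⟩)
end
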